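/- The number of Standard Young Tableaux of shape (n, n-d) equals ((d+1)/(n+1)) * C(2n-d, n), for n ≥ d ≥ 0. -/

import Mathlib

/-- Ballot counts. -/
def bcount : ℕ → ℕ → ℕ
  | _, 0 => 1
  | a, b+1 => if _h : b + 1 ≤ a then bcount (a-1) (b+1) + bcount a b else 0
termination_by a b => a + b
decreasing_by all_goals omega

lemma bcount_zero (a : ℕ) : bcount a 0 = 1 := by rw [bcount]

lemma bcount_succ (a b : ℕ) :
    bcount a (b+1) = if b + 1 ≤ a then bcount (a-1) (b+1) + bcount a b else 0 := by
  rw [bcount]; split <;> rfl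

lemma bcount_choose : ∀ m a b, a + b = m → b ≤ a →
    bcount a b + (a+b).choose (a+1) = (a+b).choose b := by
  intro m
  induction m using Nat.strong_induction_on with
  | _ m ih =>
    intro a b hm hba
    match b with
    | 0 => simp [bcount_zero, Nat.choose_eq_zero_of_lt]
    | b'+1 =>
      rw [bcount_succ, if_pos hba]
      have ha1 : 1 ≤ a := le_trans (by omega) hba
      rcases eq_or_lt_of_le hba with heq | hlt
      · -- b'+1 = a
        subst heq
        have h0 : bcount (b'+1-1) (b'+1) = 0 := by
          rw [bcount_succ, if_neg (by omega)]
        have ih2 := ih ((b'+1) + b') (by omega) (b'+1) b' rfl (by omega)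
        have e1 : (b'+1) + (b'+1) = ((b'+1) + b') + 1 := by omega
        rw [h0, zero_add, e1, Nat.choose_succ_succ' ((b'+1)+b') (b'+1),
          Nat.choose_succ_succ ((b'+1)+b') b']
        simp only [Nat.succ_eq_add_one] at *
        omega
      · -- b'+1 < a
        have ih1 := ih ((a-1) + (b'+1)) (by omega) (a-1) (b'+1) rfl (by omega)
        have ih2 := ih (a + b') (by omega) a b' rfl (by omega)
        have e2 : (a-1) + (b'+1) = a + b' := by omega
        have e3 : a - 1 + 1 = a := by omega
        rw [e2, e3] at ih1
        have e1 : a + (b'+1) = (a + b') + 1 := by omega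
        rw [e1, Nat.choose_succ_succ' (a+b') a, Nat.choose_succ_succ (a+b') b']
        simp only [Nat.succ_eq_add_one] at *
        omega

/-- total count of `y`s in `w`. -/
def tot (m : ℕ) (w : Fin m → Bool) (y : Bool) : ℕ :=
  ∑ j, if w j = y then 1 else 0

/-- count of `y`s in positions `≥ v`. -/
def cnt (m : ℕ) (w : Fin m → Bool) (y : Bool) (v : Fin m) : ℕ :=
  ∑ j, if v ≤ j ∧ w j = y then 1 else 0

def B (m a : ℕ) : Finset (Fin m → Bool) :=
  Finset.univ.filter (fun w => tot m w true = a ∧ ∀ v, cnt m w false v ≤ cnt m w true v)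

lemma mem_B {m a : ℕ} {w : Fin m → Bool} :
    w ∈ B m a ↔ tot m w true = a ∧ ∀ v, cnt m w false v ≤ cnt m w true v := by
  simp [B]

lemma tot_cons (m : ℕ) (x : Bool) (t : Fin m → Bool) (y : Bool) :
    tot (m+1) (Fin.cons x t) y = (if x = y then 1 else 0) + tot m t y := by
  unfold tot
  rw [Fin.sum_univ_succ]
  simp only [Fin.cons_zero, Fin.cons_succ]

lemma cnt_cons_succ (m : ℕ) (x : Bool) (t : Fin m → Bool) (y : Bool) (u : Fin m) :
    cnt (m+1) (Fin.cons x t) y (Fin.succ u) = cnt m t y u := by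
  unfold cnt
  rw [Fin.sum_univ_succ]
  simp only [Fin.cons_zero, Fin.cons_succ, Fin.succ_le_succ_iff]
  rw [if_neg (by simp [Fin.le_zero_iff, Fin.succ_ne_zero]), zero_add]

lemma cnt_zero (m : ℕ) (w : Fin (m+1) → Bool) (y : Bool) :
    cnt (m+1) w y 0 = tot (m+1) w y := by
  unfold cnt tot
  simp only [Fin.zero_le, true_and]

lemma tot_add (m : ℕ) (w : Fin m → Bool) : tot m w true + tot m w false = m := by
  unfold tot
  rw [← Finset.sum_add_distrib]
  have h : ∀ j ∈ Finset.univ,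
      ((if w j = true then 1 else 0) + if w j = false then 1 else 0) = 1 := by
    intro j _; cases h : w j <;> simp
  rw [Finset.sum_congr rfl h]
  simp

lemma B_card : ∀ m a b, a + b = m → (B m a).card = bcount a b := by
  intro m
  induction m with
  | zero =>
    intro a b hm
    have ha : a = 0 := by omega
    have hb : b = 0 := by omega
    subst ha hb
    rw [bcount_zero]
    have : B 0 0 = {Fin.elim0} := by
      ext w
      constructor
      · intro _
        simp only [Finset.mem_singleton]
        funext j; exact j.elim0
      · intro _
        rw [mem_B]
        refine ⟨by simp [tot], fun v => v.elim0⟩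
    rw [this, Finset.card_singleton]
  | succ m ih =>
    intro a b hm
    match b with
    | 0 =>
      have ha : a = m + 1 := by omega
      subst ha
      rw [bcount_zero]
      have : B (m+1) (m+1) = {fun _ => true} := by
        ext w
        rw [mem_B]
        constructor
        · rintro ⟨h1, _⟩
          have h2 := tot_add (m+1) w
          have h3 : tot (m+1) w false = 0 := by omega
          simp only [Finset.mem_singleton]
          funext j
          by_contra hj
          have hjf : w j = false := by simpa using hj
          have hle : (if w j = false then 1 else 0) ≤ tot (m+1) w false :=
            Finset.single_le_sum (f := fun i => if w i = false then (1:ℕ) else 0)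
              (fun i _ => Nat.zero_le _) (Finset.mem_univ j)
          rw [if_pos hjf] at hle
          omega
        · intro h
          simp only [Finset.mem_singleton] at h
          subst h
          constructor
          · simp [tot]
          · intro v; simp [cnt]
      rw [this, Finset.card_singleton]
    | b'+1 =>
      rw [bcount_succ]
      by_cases hba : b' + 1 ≤ a
      · rw [if_pos hba]
        have ha1 : 1 ≤ a := by omega
        have key : B (m+1) a =
            ((B m (a-1)).image (Fin.cons true)) ∪ ((B m a).image (Fin.cons false)) := by
          ext w
          constructor
          · intro hw
            rw [mem_B] at hw
            obtain ⟨h1, h2⟩ := hw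
            have htail : ∀ v, cnt m (Fin.tail w) false v ≤ cnt m (Fin.tail w) true v := by
              intro v
              have h2' := h2 (Fin.succ v)
              rw [← Fin.cons_self_tail w, cnt_cons_succ, cnt_cons_succ] at h2'
              exact h2'
            have htoteq := tot_cons m (w 0) (Fin.tail w) true
            rw [Fin.cons_self_tail w] at htoteq
            cases h0 : w 0 with
            | true =>
              apply Finset.mem_union_left
              rw [Finset.mem_image]
              refine ⟨Fin.tail w, ?_, by rw [← h0]; exact Fin.cons_self_tail w⟩
              rw [mem_B]
              refine ⟨?_, htail⟩
              rw [h0, if_pos rfl] at htoteq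
              omega
            | false =>
              apply Finset.mem_union_right
              rw [Finset.mem_image]
              refine ⟨Fin.tail w, ?_, by rw [← h0]; exact Fin.cons_self_tail w⟩
              rw [mem_B]
              refine ⟨?_, htail⟩
              rw [h0, if_neg (by simp)] at htoteq
              omega
          · intro hw
            rw [Finset.mem_union, Finset.mem_image, Finset.mem_image] at hw
            rw [mem_B]
            rcases hw with ⟨t, ht, rfl⟩ | ⟨t, ht, rfl⟩
            · rw [mem_B] at ht
              obtain ⟨ht1, ht2⟩ := ht
              have htt : tot (m+1) (Fin.cons true t) true = a := by
                rw [tot_cons, if_pos rfl, ht1]; omega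
              refine ⟨htt, ?_⟩
              intro v
              cases v using Fin.cases with
              | zero =>
                rw [cnt_zero, cnt_zero, htt]
                have h4 := tot_add (m+1) (Fin.cons true t)
                omega
              | succ u => rw [cnt_cons_succ, cnt_cons_succ]; exact ht2 u
            · rw [mem_B] at ht
              obtain ⟨ht1, ht2⟩ := ht
              have htt : tot (m+1) (Fin.cons false t) true = a := by
                rw [tot_cons, if_neg (by simp), ht1]; omega
              refine ⟨htt, ?_⟩
              intro v
              cases v using Fin.cases with
              | zero =>
                rw [cnt_zero, cnt_zero, htt]
                have h4 := tot_add (m+1) (Fin.cons false t)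
                omega
              | succ u => rw [cnt_cons_succ, cnt_cons_succ]; exact ht2 u
        rw [key, Finset.card_union_of_disjoint, Finset.card_image_of_injective _
          (Fin.cons_right_injective _), Finset.card_image_of_injective _
          (Fin.cons_right_injective _), ih (a-1) (b'+1) (by omega), ih a b' (by omega)]
        · rw [Finset.disjoint_left]
          rintro x hx hy
          rw [Finset.mem_image] at hx hy
          obtain ⟨t1, _, rfl⟩ := hx
          obtain ⟨t2, _, he⟩ := hy
          have := congrFun he 0
          simp at this
      · rw [if_neg hba]
        have : B (m+1) a = ∅ := by
          rw [Finset.eq_empty_iff_forall_notMem]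
          intro w hw
          rw [mem_B] at hw
          obtain ⟨h1, h2⟩ := hw
          have h3 := h2 0
          rw [cnt_zero, cnt_zero] at h3
          have h4 := tot_add (m+1) w
          omega
        rw [this, Finset.card_empty]

-- initial-segment lemma for lower sets in Fin
lemma lower_mem_iff {k : ℕ} {t : Finset (Fin k)}
    (hl : ∀ ⦃i j : Fin k⦄, i ≤ j → j ∈ t → i ∈ t) (j : Fin k) :
    j ∈ t ↔ (j : ℕ) < t.card := by
  constructor
  · intro hj
    have hsub : Finset.Iic j ⊆ t := fun i hi => hl (Finset.mem_Iic.mp hi) hj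
    have := Finset.card_le_card hsub
    rw [Fin.card_Iic] at this
    omega
  · intro hj
    by_contra hjt
    have hsub : t ⊆ Finset.Iio j := by
      intro i hi
      rw [Finset.mem_Iio]
      by_contra hij
      exact hjt (hl (le_of_not_gt hij) hi)
    have := Finset.card_le_card hsub
    rw [Fin.card_Iio] at this
    omega

def nb {k m : ℕ} (f : Fin k → Fin m) (v : Fin m) : ℕ :=
  (Finset.univ.filter (fun i => f i ≤ v)).card

lemma nb_iff {k m : ℕ} {f : Fin k → Fin m} (hf : StrictMono f) (j : Fin k) (v : Fin m) :
    f j ≤ v ↔ (j : ℕ) < nb f v := by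
  have := lower_mem_iff (t := Finset.univ.filter (fun i => f i ≤ v))
    (fun i j hij hj => by
      simp only [Finset.mem_filter, Finset.mem_univ, true_and] at hj ⊢
      exact le_trans (hf.monotone hij) hj) j
  simpa [nb] using this

lemma nb_bot_le_nb_top {m n b : ℕ} (hbn : b ≤ n) (top : Fin n → Fin m) (bot : Fin b → Fin m)
    (ht : StrictMono top) (hb : StrictMono bot)
    (hcol : ∀ j : Fin b, top (Fin.castLE hbn j) < bot j) (v : Fin m) :
    nb bot v ≤ nb top v := by
  set k := nb bot v with hk
  rcases Nat.eq_zero_or_pos k with h0 | hpos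
  · omega
  have hkb : k ≤ b := by
    have := Finset.card_filter_le (Finset.univ : Finset (Fin b)) (fun i => bot i ≤ v)
    simpa [hk, nb] using this
  set j : Fin b := ⟨k - 1, by omega⟩ with hj
  have hbj : bot j ≤ v := (nb_iff hb j v).mpr (by simp [hj, ← hk]; omega)
  have h1 : top (Fin.castLE hbn j) ≤ v := le_of_lt (lt_of_lt_of_le (hcol j) hbj)
  have h2 := (nb_iff ht (Fin.castLE hbn j) v).mp h1
  simp only [Fin.coe_castLE, hj] at h2
  omega

lemma cols_of_nb {m n b : ℕ} (hbn : b ≤ n) (top : Fin n → Fin m) (bot : Fin b → Fin m)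
    (ht : StrictMono top) (hb : StrictMono bot)
    (hballot : ∀ v, nb bot v ≤ nb top v) (j : Fin b) :
    top (Fin.castLE hbn j) ≤ bot j := by
  have h1 : (j : ℕ) < nb bot (bot j) := (nb_iff hb j (bot j)).mp le_rfl
  have h2 : (j : ℕ) < nb top (bot j) := lt_of_lt_of_le h1 (hballot _)
  exact (nb_iff ht (Fin.castLE hbn j) (bot j)).mpr (by simpa using h2)

lemma card_filter_rev {m : ℕ} (p : Fin m → Prop) [DecidablePred p] :
    (Finset.univ.filter p).card = (Finset.univ.filter (fun j => p (Fin.rev j))).card := by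
  apply Finset.card_bij' (fun x _ => Fin.rev x) (fun x _ => Fin.rev x) <;>
    simp [Fin.rev_rev]

lemma tot_eq_card {m : ℕ} (w : Fin m → Bool) (y : Bool) :
    tot m w y = (Finset.univ.filter (fun x => w (Fin.rev x) = y)).card := by
  rw [tot]
  have h := card_filter_rev (fun x => w (Fin.rev x) = y)
  simp only [Fin.rev_rev] at h
  rw [h]
  simp [Finset.sum_boole]

lemma cnt_eq_card {m : ℕ} (w : Fin m → Bool) (y : Bool) (u : Fin m) :
    cnt m w y u = (Finset.univ.filter (fun x => x ≤ Fin.rev u ∧ w (Fin.rev x) = y)).card := by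
  rw [cnt]
  have h := card_filter_rev (fun x => x ≤ Fin.rev u ∧ w (Fin.rev x) = y)
  simp only [Fin.rev_rev, Fin.rev_le_rev] at h
  rw [h]
  simp [Finset.sum_boole]

lemma nb_eq_image {k m : ℕ} {f : Fin k → Fin m} (hinj : Function.Injective f) (v : Fin m) :
    nb f v = ((Finset.univ.image f).filter (· ≤ v)).card := by
  rw [nb]
  apply Finset.card_bij (fun i _ => f i)
  · intro i hi
    simp only [Finset.mem_filter, Finset.mem_univ, true_and] at hi
    simp only [Finset.mem_filter, Finset.mem_image]
    exact ⟨⟨i, Finset.mem_univ i, rfl⟩, hi⟩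
  · intro i _ j _ h
    exact hinj h
  · intro x hx
    simp only [Finset.mem_filter, Finset.mem_image] at hx
    obtain ⟨⟨i, _, rfl⟩, hle⟩ := hx
    exact ⟨i, by simp [hle], rfl⟩

def wOf {m : ℕ} (S : Finset (Fin m)) : Fin m → Bool := fun v => decide (Fin.rev v ∈ S)

lemma tot_wOf {m : ℕ} (S : Finset (Fin m)) : tot m (wOf S) true = S.card := by
  rw [tot_eq_card]
  simp [wOf, Fin.rev_rev, Finset.filter_univ_mem]

lemma cnt_wOf_true {m : ℕ} (S : Finset (Fin m)) (u : Fin m) :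
    cnt m (wOf S) true u = (S.filter (· ≤ Fin.rev u)).card := by
  rw [cnt_eq_card]
  congr 1
  ext x
  simp [wOf, Fin.rev_rev, and_comm]

lemma cnt_wOf_false {m : ℕ} (S : Finset (Fin m)) (u : Fin m) :
    cnt m (wOf S) false u = (Sᶜ.filter (· ≤ Fin.rev u)).card := by
  rw [cnt_eq_card]
  congr 1
  ext x
  simp [wOf, Fin.rev_rev, and_comm]

lemma wOf_filter {m : ℕ} (w : Fin m → Bool) :
    wOf (Finset.univ.filter (fun x => w (Fin.rev x) = true)) = w := by
  funext v
  simp only [wOf, Finset.mem_filter, Finset.mem_univ, true_and, Fin.rev_rev]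
  cases h : w v <;> simp [h]

lemma compl_image {m n b : ℕ} (top : Fin n → Fin m) (bot : Fin b → Fin m)
    (hne : ∀ i j, top i ≠ bot j)
    (hcover : ∀ v, (∃ i, top i = v) ∨ (∃ j, bot j = v)) :
    (Finset.univ.image top)ᶜ = Finset.univ.image bot := by
  ext x
  simp only [Finset.mem_compl, Finset.mem_image, Finset.mem_univ, true_and]
  constructor
  · intro hx
    rcases hcover x with ⟨i, hi⟩ | ⟨j, hj⟩
    · exact absurd ⟨i, hi⟩ hx
    · exact ⟨j, hj⟩
  · rintro ⟨j, rfl⟩ ⟨i, hi⟩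
    exact hne i j hi


lemma wOf_mem_B {m n b : ℕ} (hmn : n + b = m) (hbn : b ≤ n)
    (top : Fin n → Fin m) (bot : Fin b → Fin m)
    (ht : StrictMono top) (hb : StrictMono bot)
    (hcol : ∀ j, top (Fin.castLE hbn j) < bot j)
    (hSc : (Finset.univ.image top)ᶜ = Finset.univ.image bot) :
    wOf (Finset.univ.image top) ∈ B m n := by
  rw [mem_B]
  constructor
  · rw [tot_wOf, Finset.card_image_of_injective _ ht.injective]
    simp
  · intro v
    rw [cnt_wOf_true, cnt_wOf_false, hSc, ← nb_eq_image ht.injective,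
      ← nb_eq_image hb.injective]
    exact nb_bot_le_nb_top hbn top bot ht hb hcol _

/-- A two-row Standard Young Tableau of shape `(n, n-d)`, given by its rows
`top : Fin n → Fin (2*n-d)` and `bot : Fin (n-d) → Fin (2*n-d)` (entries are
`0`-indexed): rows strictly increase, columns strictly increase, and the two
rows partition all the entries. -/
def IsSYT (n d : ℕ) (top : Fin n → Fin (2*n - d)) (bot : Fin (n - d) → Fin (2*n - d)) : Prop :=
  StrictMono top ∧ StrictMono bot ∧
  (∀ j : Fin (n - d), top (Fin.castLE (Nat.sub_le n d) j) < bot j) ∧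
  (∀ i j, top i ≠ bot j) ∧
  (∀ v : Fin (2*n - d), (∃ i, top i = v) ∨ (∃ j, bot j = v))

/-- The number of Standard Young Tableaux of shape `(n, n-d)` is
`((d+1)/(n+1)) * C(2n-d, n)`. -/
theorem syt_two_row_count (n d : ℕ) (hdn : d ≤ n) :
    ({pr : (Fin n → Fin (2 * n - d)) × (Fin (n - d) → Fin (2 * n - d)) |
        IsSYT n d pr.1 pr.2}.ncard : ℚ)
      = ((d + 1 : ℚ) / (n + 1)) * (Nat.choose (2 * n - d) n) := by
  classical
  have hbn : n - d ≤ n := Nat.sub_le n d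
  have hmn : n + (n - d) = 2 * n - d := by omega
  have hfin : ({pr : (Fin n → Fin (2 * n - d)) × (Fin (n - d) → Fin (2 * n - d)) |
      IsSYT n d pr.1 pr.2}).Finite := Set.toFinite _
  have hcard : ({pr : (Fin n → Fin (2 * n - d)) × (Fin (n - d) → Fin (2 * n - d)) |
      IsSYT n d pr.1 pr.2}).ncard = bcount n (n - d) := by
    rw [Set.ncard_eq_toFinset_card _ hfin, ← B_card (2*n-d) n (n-d) hmn]
    apply Finset.card_bij (fun pr _ => wOf (Finset.univ.image pr.1))
    · intro pr hpr
      rw [Set.Finite.mem_toFinset] at hpr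
      obtain ⟨ht, hb, hcol, hne, hcover⟩ := hpr
      exact wOf_mem_B hmn hbn _ _ ht hb hcol (compl_image _ _ hne hcover)
    · intro pr hpr pr' hpr' heq
      rw [Set.Finite.mem_toFinset] at hpr hpr'
      obtain ⟨ht, hb, _, hne, hcover⟩ := hpr
      obtain ⟨ht', hb', _, hne', hcover'⟩ := hpr'
      have hS : Finset.univ.image pr.1 = Finset.univ.image pr'.1 := by
        ext x
        have hx := congrFun heq (Fin.rev x)
        simpa [wOf, Fin.rev_rev] using hx
      have hr1 : Set.range pr.1 = Set.range pr'.1 := by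
        rw [← Set.image_univ, ← Set.image_univ, ← Finset.coe_univ,
          ← Finset.coe_image, ← Finset.coe_image, hS]
      haveI : WellFoundedLT (Fin n) := inferInstance
      haveI : WellFoundedLT (Fin (n-d)) := inferInstance
      have h1 : pr.1 = pr'.1 := (StrictMono.range_inj ht ht').mp hr1
      have hr2 : Set.range pr.2 = Set.range pr'.2 := by
        rw [← Set.image_univ, ← Set.image_univ, ← Finset.coe_univ,
          ← Finset.coe_image, ← Finset.coe_image, ← compl_image _ _ hne hcover,
          ← compl_image _ _ hne' hcover', hS]
      have h2 : pr.2 = pr'.2 := (StrictMono.range_inj hb hb').mp hr2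
      exact Prod.ext h1 h2
    · intro w hw
      set S := Finset.univ.filter (fun x => w (Fin.rev x) = true) with hSdef
      have hwS : wOf S = w := wOf_filter w
      rw [mem_B] at hw
      obtain ⟨h1, h2⟩ := hw
      have hScard : S.card = n := by rw [← tot_wOf S, hwS]; exact h1
      have hSccard : Sᶜ.card = n - d := by
        rw [Finset.card_compl, hScard]
        simp only [Fintype.card_fin]
        omega
      set top : Fin n → Fin (2*n-d) := fun i => S.orderEmbOfFin hScard i with htopdef
      set bot : Fin (n-d) → Fin (2*n-d) := fun j => Sᶜ.orderEmbOfFin hSccard j with hbotdef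
      have ht : StrictMono top := (S.orderEmbOfFin hScard).strictMono
      have hb : StrictMono bot := (Sᶜ.orderEmbOfFin hSccard).strictMono
      have himg : Finset.univ.image top = S := by
        apply Finset.coe_injective
        rw [Finset.coe_image, Finset.coe_univ, Set.image_univ]
        exact Finset.range_orderEmbOfFin S hScard
      have himgb : Finset.univ.image bot = Sᶜ := by
        apply Finset.coe_injective
        rw [Finset.coe_image, Finset.coe_univ, Set.image_univ]
        exact Finset.range_orderEmbOfFin Sᶜ hSccard
      have hmem : ∀ i, top i ∈ S := fun i => Finset.orderEmbOfFin_mem S hScard i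
      have hmemb : ∀ j, bot j ∈ Sᶜ := fun j => Finset.orderEmbOfFin_mem Sᶜ hSccard j
      have hne : ∀ i j, top i ≠ bot j := by
        intro i j he
        have hj := hmemb j
        rw [← he] at hj
        exact (Finset.mem_compl.mp hj) (hmem i)
      have hcol : ∀ j, top (Fin.castLE hbn j) < bot j := by
        intro j
        have hle : top (Fin.castLE hbn j) ≤ bot j := by
          apply cols_of_nb hbn top bot ht hb
          intro v
          have h2' := h2 (Fin.rev v)
          rw [← hwS, cnt_wOf_true, cnt_wOf_false, Fin.rev_rev] at h2'
          rw [nb_eq_image ht.injective, nb_eq_image hb.injective, himg, himgb]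
          exact h2'
        exact lt_of_le_of_ne hle (hne _ j)
      have hcover : ∀ v : Fin (2*n-d), (∃ i, top i = v) ∨ (∃ j, bot j = v) := by
        intro v
        by_cases hv : v ∈ S
        · left
          rw [← himg] at hv
          obtain ⟨i, _, hi⟩ := Finset.mem_image.mp hv
          exact ⟨i, hi⟩
        · right
          have hv' : v ∈ Sᶜ := Finset.mem_compl.mpr hv
          rw [← himgb] at hv'
          obtain ⟨j, _, hj⟩ := Finset.mem_image.mp hv'
          exact ⟨j, hj⟩
      refine ⟨(top, bot), ?_, ?_⟩
      · rw [Set.Finite.mem_toFinset]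
        exact ⟨ht, hb, hcol, hne, hcover⟩
      · show wOf (Finset.univ.image top) = w
        rw [himg]
        exact hwS
  rw [hcard]
  have h2 := bcount_choose (n + (n-d)) n (n-d) rfl hbn
  rw [hmn] at h2
  have h3 : (2*n-d).choose (n-d) = (2*n-d).choose n := by
    have e : 2*n-d-n = n-d := by omega
    rw [← e, Nat.choose_symm (by omega)]
  have h4 : (2*n-d).choose (n+1) * (n+1) = (2*n-d).choose n * (n-d) := by
    have h := Nat.choose_succ_right_eq (2*n-d) n
    rwa [show 2*n-d-n = n-d by omega] at h
  rw [h3] at h2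
  have hq2 : (bcount n (n-d) : ℚ) + ((2*n-d).choose (n+1) : ℚ)
      = ((2*n-d).choose n : ℚ) := by exact_mod_cast h2
  have hq4 : ((2*n-d).choose (n+1) : ℚ) * ((n : ℚ)+1)
      = ((2*n-d).choose n : ℚ) * ((n : ℚ) - (d : ℚ)) := by
    have h := congrArg (Nat.cast : ℕ → ℚ) h4
    push_cast [Nat.cast_sub hdn] at h
    linarith [h]
  have hn1 : (n:ℚ) + 1 ≠ 0 := by positivity
  field_simp
  linear_combination ((n:ℚ)+1) * hq2 - hq4
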